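/- (Effective velocity reformulation.) Let $(a, \upsilon, \theta)$ solve $\partial_t a + \mathrm{div}\,\upsilon = f$, $\partial_t\upsilon - \widetilde{\mathcal{A}}\upsilon + \nabla a + \gamma\nabla\theta = g$ with $\widetilde{\mathcal{A}} = (\lambda+2\mu)^{-1}(\mu\Delta + (\lambda+\mu)\nabla\mathrm{div})$. Define the effective velocity $w := \nabla(-\Delta)^{-1}(a - \mathrm{div}\,\upsilon)$. Then $(a,w)$ satisfies $\partial_t w - \Delta w = \nabla(-\Delta)^{-1}(f - \mathrm{div}\,g) - \gamma\nabla\theta + w - (-\Delta)^{-1}\nabla a$ and $\partial_t a + a = f - \mathrm{div}\,w$. -/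

import Mathlib

open Complex

/-- Statement 19 (effective velocity reformulation, stated at the level of Fourier
multipliers, i.e. on the Fourier side at a fixed frequency `ξ ≠ 0`; the symbol of `∇` is
`iξ`, of `div` is `iξ·`, of `Δ` is `-‖ξ‖²`, of `(-Δ)⁻¹` is `‖ξ‖⁻²`, and
`𝒜̃ = (λ+2μ)⁻¹(μΔ + (λ+μ)∇div)`).  If `(a, v, θ)` solves
`a' + div v = f`, `v' - 𝒜̃v + ∇a + γ∇θ = g`, and `w := ∇(-Δ)⁻¹(a - div v)`, then
`w' - Δw = ∇(-Δ)⁻¹(f - div g) - γ∇θ + w - (-Δ)⁻¹∇a` and `a' + a = f - div w`. -/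
theorem stmt19 {d : ℕ} (lam μ γ : ℝ) (hμ : 0 < μ) (hν : 0 < lam + 2 * μ)
    (ξ : EuclideanSpace ℝ (Fin d)) (hξ : ξ ≠ 0)
    (a θ f a' : ℝ → ℂ) (v g v' : ℝ → Fin d → ℂ)
    (ha : ∀ t : ℝ, HasDerivAt a (a' t) t)
    (hv : ∀ (t : ℝ) (i : Fin d), HasDerivAt (fun s => v s i) (v' t i) t)
    (e1 : ∀ t : ℝ, a' t + I * (∑ i, (ξ i : ℂ) * v t i) = f t)
    (e2 : ∀ (t : ℝ) (i : Fin d),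
      v' t i - ((lam + 2 * μ : ℝ) : ℂ)⁻¹
          * (-(μ : ℂ) * (‖ξ‖ : ℂ) ^ 2 * v t i
             - ((lam + μ : ℝ) : ℂ) * (∑ k, (ξ k : ℂ) * v t k) * (ξ i : ℂ))
        + I * a t * (ξ i : ℂ) + (γ : ℂ) * I * θ t * (ξ i : ℂ) = g t i)
    (w : ℝ → Fin d → ℂ)
    (hw : ∀ (t : ℝ) (i : Fin d),
      w t i = I * (ξ i : ℂ) * (a t - I * (∑ k, (ξ k : ℂ) * v t k)) / (‖ξ‖ : ℂ) ^ 2) :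
    (∀ (t : ℝ) (i : Fin d),
      HasDerivAt (fun s => w s i)
        (-(‖ξ‖ : ℂ) ^ 2 * w t i
          + I * (ξ i : ℂ) * (f t - I * (∑ k, (ξ k : ℂ) * g t k)) / (‖ξ‖ : ℂ) ^ 2
          - (γ : ℂ) * I * θ t * (ξ i : ℂ)
          + w t i
          - I * (ξ i : ℂ) * a t / (‖ξ‖ : ℂ) ^ 2) t) ∧
    (∀ t : ℝ, a' t + a t = f t - I * (∑ i, (ξ i : ℂ) * w t i)) := by

  have hnorm : (0:ℝ) < ‖ξ‖ := norm_pos_iff.mpr hξ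
  have hN0 : ((‖ξ‖ : ℂ)) ^ 2 ≠ 0 :=
    pow_ne_zero _ (Complex.ofReal_ne_zero.mpr hnorm.ne')
  have hN : (∑ k, (ξ k : ℂ) ^ 2) = ((‖ξ‖ : ℂ)) ^ 2 := by
    have : ‖ξ‖ ^ 2 = ∑ k, (ξ k) ^ 2 := by
      rw [EuclideanSpace.norm_eq]
      rw [Real.sq_sqrt (by positivity)]
      simp [_root_.sq_abs]
    rw [show ((‖ξ‖:ℝ):ℂ)^2 = ((‖ξ‖^2 : ℝ) : ℂ) by push_cast; ring, this]
    push_cast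
    ring
  have hinv : ((lam + 2 * μ : ℝ) : ℂ)⁻¹ * ((lam + 2 * μ : ℝ) : ℂ) = 1 :=
    inv_mul_cancel₀ (by exact_mod_cast hν.ne')
  constructor
  · intro t i
    have hS : HasDerivAt (fun s => ∑ k, (ξ k : ℂ) * v s k) (∑ k, (ξ k : ℂ) * v' t k) t :=
      HasDerivAt.fun_sum fun k _ => (hv t k).const_mul _
    have hD : HasDerivAt (fun s => w s i)
        (I * (ξ i : ℂ) * (a' t - I * (∑ k, (ξ k : ℂ) * v' t k)) / (‖ξ‖ : ℂ) ^ 2) t := by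
      have heq : (fun s => w s i)
          = fun s => I * (ξ i : ℂ) * (a s - I * (∑ k, (ξ k : ℂ) * v s k)) / (‖ξ‖ : ℂ) ^ 2 :=
        funext fun s => hw s i
      rw [heq]
      exact (((ha t).sub (hS.const_mul I)).const_mul (I * (ξ i : ℂ))).div_const _
    have hS' : (∑ k, (ξ k : ℂ) * v' t k)
        = (∑ k, (ξ k : ℂ) * g t k) - I * a t * (‖ξ‖ : ℂ) ^ 2
          - (γ : ℂ) * I * θ t * (‖ξ‖ : ℂ) ^ 2
          - (‖ξ‖ : ℂ) ^ 2 * (∑ k, (ξ k : ℂ) * v t k) := by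
      have key : ∀ k : Fin d, (ξ k : ℂ) * v' t k
          = (ξ k : ℂ) * g t k - I * a t * (ξ k : ℂ) ^ 2 - (γ : ℂ) * I * θ t * (ξ k : ℂ) ^ 2
            + ((lam + 2 * μ : ℝ) : ℂ)⁻¹ * (-(μ : ℂ) * (‖ξ‖ : ℂ) ^ 2) * ((ξ k : ℂ) * v t k)
            + ((lam + 2 * μ : ℝ) : ℂ)⁻¹ * (-((lam + μ : ℝ) : ℂ))
              * (∑ j, (ξ j : ℂ) * v t j) * (ξ k : ℂ) ^ 2 :=
        fun k => by linear_combination (ξ k : ℂ) * e2 t k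
      rw [Finset.sum_congr rfl fun k _ => key k]
      simp only [Finset.sum_add_distrib, Finset.sum_sub_distrib, ← Finset.mul_sum,
        ← Finset.sum_mul]
      push_cast at hinv hN ⊢
      linear_combination
        (-I * a t - (γ : ℂ) * I * θ t
          + ((lam:ℂ) + 2*(μ:ℂ))⁻¹ * (-((lam:ℂ) + (μ:ℂ))) * (∑ j, (ξ j : ℂ) * v t j)) * hN
        + (-((‖ξ‖:ℂ)^2 * (∑ k, (ξ k : ℂ) * v t k))) * hinv
    have ha' : a' t = f t - I * (∑ k, (ξ k : ℂ) * v t k) := by linear_combination e1 t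
    convert hD using 1
    rw [hw t i, ha', hS']
    have hn : (‖ξ‖:ℂ) ≠ 0 := Complex.ofReal_ne_zero.mpr hnorm.ne'
    field_simp
    linear_combination (-((‖ξ‖:ℂ)^2) * (ξ i : ℂ) * (a t + (γ:ℂ) * θ t)) * Complex.I_sq
  · intro t
    have hsum : (∑ i, (ξ i : ℂ) * w t i)
        = I * (a t - I * (∑ k, (ξ k : ℂ) * v t k)) := by
      have : ∀ i : Fin d, (ξ i : ℂ) * w t i
          = (ξ i : ℂ) ^ 2 * (I * (a t - I * (∑ k, (ξ k : ℂ) * v t k)) / (‖ξ‖ : ℂ) ^ 2) :=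
        fun i => by rw [hw t i]; ring
      rw [Finset.sum_congr rfl fun i _ => this i, ← Finset.sum_mul, hN]
      have hn : (‖ξ‖:ℂ) ≠ 0 := Complex.ofReal_ne_zero.mpr hnorm.ne'
      field_simp
    rw [hsum]
    linear_combination e1 t + (a t - I * (∑ k, (ξ k : ℂ) * v t k)) * Complex.I_sq
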